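/- Let k be a positive integer, let κ = 2^k, and let p be a non-negative integer with p < k. Let M be a multiset of powers of 2 whose sum is exactly κ and which contains at least one element of size at most 2^p. Then there exist two disjoint sub-multisets M₁ and M₂ of M (that is, M₁ + M₂ is a sub-multiset of M) such that the sum of the elements of M₁ and the sum of the elements of M₂ are both exactly 2^p. -/

import Mathlib

/-- Key lemma: a multiset whose elements are powers of 2 at most `2^p` and whose
sum is at least `2^p` has a sub-multiset summing exactly to `2^p`. -/
lemma exists_sub_sum_pow (p : ℕ) : ∀ (M : Multiset ℕ),
    (∀ x ∈ M, ∃ j : ℕ, j ≤ p ∧ x = 2 ^ j) → 2 ^ p ≤ M.sum →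
    ∃ N : Multiset ℕ, N ≤ M ∧ N.sum = 2 ^ p := by
  induction p with
  | zero =>
    intro M hpow hsum
    have hne : M ≠ 0 := by
      rintro rfl; simp at hsum
    obtain ⟨x, hx⟩ := Multiset.exists_mem_of_ne_zero hne
    obtain ⟨j, hj, rfl⟩ := hpow x hx
    interval_cases j
    exact ⟨{2 ^ 0}, by simpa using Multiset.singleton_le.mpr hx, by simp⟩
  | succ p ih =>
    intro M hpow hsum
    by_cases hmem : (2 : ℕ) ^ (p + 1) ∈ M
    · exact ⟨{2 ^ (p + 1)}, Multiset.singleton_le.mpr hmem, by simp⟩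
    · have hpow' : ∀ x ∈ M, ∃ j : ℕ, j ≤ p ∧ x = 2 ^ j := by
        intro x hx
        obtain ⟨j, hj, rfl⟩ := hpow x hx
        rcases Nat.lt_or_ge j (p + 1) with h | h
        · exact ⟨j, Nat.lt_succ_iff.mp h, rfl⟩
        · have : j = p + 1 := le_antisymm hj h
          subst this; exact absurd hx hmem
      have h1 : 2 ^ p ≤ M.sum := le_trans (by
        rw [pow_succ]; omega) hsum
      obtain ⟨N₁, hN₁le, hN₁sum⟩ := ih M hpow' h1
      have hsub : (M - N₁).sum = M.sum - 2 ^ p := by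
        have := tsub_add_cancel_of_le hN₁le
        calc (M - N₁).sum = ((M - N₁) + N₁).sum - N₁.sum := by
              rw [Multiset.sum_add]; omega
          _ = M.sum - 2 ^ p := by rw [this, hN₁sum]
      have h2 : 2 ^ p ≤ (M - N₁).sum := by
        rw [hsub]; rw [pow_succ] at hsum; omega
      obtain ⟨N₂, hN₂le, hN₂sum⟩ := ih (M - N₁)
        (fun x hx => hpow' x (Multiset.subset_of_le (tsub_le_self) hx)) h2
      refine ⟨N₁ + N₂, ?_, by rw [Multiset.sum_add, hN₁sum, hN₂sum]; ring⟩
      rw [add_comm]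
      exact (le_tsub_iff_right hN₁le).mp hN₂le

theorem stmt7 (k p : ℕ) (hk : 0 < k) (hp : p < k) (M : Multiset ℕ)
    (hpow : ∀ x ∈ M, ∃ j : ℕ, x = 2 ^ j) (hsum : M.sum = 2 ^ k)
    (hsmall : ∃ x ∈ M, x ≤ 2 ^ p) :
    ∃ M₁ M₂ : Multiset ℕ, M₁ + M₂ ≤ M ∧ M₁.sum = 2 ^ p ∧ M₂.sum = 2 ^ p := by
  classical
  set S := M.filter (fun x => x ≤ 2 ^ p) with hS
  set B := M.filter (fun x => ¬ x ≤ 2 ^ p) with hB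
  have hMSB : S + B = M := Multiset.filter_add_not _ M
  have hSle : S ≤ M := Multiset.filter_le _ M
  have hSsum : S.sum + B.sum = 2 ^ k := by
    rw [← Multiset.sum_add, hMSB, hsum]
  -- every element of B is divisible by 2^(p+1)
  have hBdvd : (2 : ℕ) ^ (p + 1) ∣ B.sum := by
    apply Multiset.dvd_sum
    intro x hx
    have hxM : x ∈ M := Multiset.mem_of_le (Multiset.filter_le _ M) hx
    have hxgt : ¬ x ≤ 2 ^ p := (Multiset.mem_filter.mp hx).2
    obtain ⟨j, rfl⟩ := hpow x hxM
    have : p < j := by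
      by_contra h
      exact hxgt (Nat.pow_le_pow_right (by norm_num) (by omega))
    exact pow_dvd_pow 2 (by omega)
  have hkdvd : (2 : ℕ) ^ (p + 1) ∣ 2 ^ k := pow_dvd_pow 2 (by omega)
  have hSdvd : (2 : ℕ) ^ (p + 1) ∣ S.sum := by
    have : S.sum = 2 ^ k - B.sum := by omega
    rw [this]
    exact Nat.dvd_sub hkdvd hBdvd
  have hSne : S ≠ 0 := by
    obtain ⟨x, hxM, hxle⟩ := hsmall
    intro h
    have : x ∈ S := Multiset.mem_filter.mpr ⟨hxM, hxle⟩
    rw [h] at this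
    exact absurd this (Multiset.notMem_zero x)
  have hSpos : 0 < S.sum := by
    obtain ⟨x, hx⟩ := Multiset.exists_mem_of_ne_zero hSne
    have hxM : x ∈ M := Multiset.mem_of_le hSle hx
    obtain ⟨j, rfl⟩ := hpow x hxM
    exact lt_of_lt_of_le (pow_pos (by norm_num : (0:ℕ) < 2) j)
      (Multiset.single_le_sum (fun _ _ => Nat.zero_le _) _ hx)
  have hSge : 2 ^ (p + 1) ≤ S.sum := Nat.le_of_dvd hSpos hSdvd
  have hSpow : ∀ x ∈ S, ∃ j : ℕ, j ≤ p ∧ x = 2 ^ j := by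
    intro x hx
    have hxM : x ∈ M := Multiset.mem_of_le hSle hx
    have hxle : x ≤ 2 ^ p := (Multiset.mem_filter.mp hx).2
    obtain ⟨j, rfl⟩ := hpow x hxM
    refine ⟨j, ?_, rfl⟩
    exact (Nat.pow_le_pow_iff_right (by norm_num)).mp hxle
  obtain ⟨N₁, hN₁le, hN₁sum⟩ := exists_sub_sum_pow p S hSpow
    (le_trans (by rw [pow_succ]; omega) hSge)
  have hsub : (S - N₁).sum = S.sum - 2 ^ p := by
    have h := tsub_add_cancel_of_le hN₁le
    calc (S - N₁).sum = ((S - N₁) + N₁).sum - N₁.sum := by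
          rw [Multiset.sum_add]; omega
      _ = S.sum - 2 ^ p := by rw [h, hN₁sum]
  obtain ⟨N₂, hN₂le, hN₂sum⟩ := exists_sub_sum_pow p (S - N₁)
    (fun x hx => hSpow x (Multiset.subset_of_le tsub_le_self hx))
    (by rw [hsub]; rw [pow_succ] at hSge; omega)
  refine ⟨N₁, N₂, ?_, hN₁sum, hN₂sum⟩
  have : N₁ + N₂ ≤ S := by
    rw [add_comm]
    exact (le_tsub_iff_right hN₁le).mp hN₂le
  exact le_trans this hSle
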